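/- Let n ≥ 1 and a₁, a₂, a₃ be natural numbers, let v = (a₁/n, a₂/n, a₃/n) ∈ ℚ³, and let N be the additive subgroup of ℚ³ generated by the three standard basis vectors e₁, e₂, e₃ together with v. Let M = {x ∈ N : all three coordinates of x are ≥ 0}. Then the set of nonzero elements of M that cannot be written as the sum of two nonzero elements of M is finite and has cardinality at most n + 2. -/

import Mathlib

theorem stmt_8 (n a₁ a₂ a₃ : ℕ) (hn : 1 ≤ n)
    (v : Fin 3 → ℚ) (hv : v = ![(a₁ : ℚ) / n, (a₂ : ℚ) / n, (a₃ : ℚ) / n])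
    (N : AddSubgroup (Fin 3 → ℚ))
    (hN : N = AddSubgroup.closure
      {Pi.single 0 1, Pi.single 1 1, Pi.single 2 1, v})
    (M : Set (Fin 3 → ℚ)) (hM : M = {x | x ∈ N ∧ ∀ i, 0 ≤ x i}) :
    {x ∈ M | x ≠ 0 ∧ ¬ ∃ y ∈ M, ∃ z ∈ M, y ≠ 0 ∧ z ≠ 0 ∧ x = y + z}.Finite ∧
    {x ∈ M | x ≠ 0 ∧ ¬ ∃ y ∈ M, ∃ z ∈ M, y ≠ 0 ∧ z ≠ 0 ∧ x = y + z}.ncard ≤ n + 2 := by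
  subst hN hM
  have hn0 : (n : ℚ) ≠ 0 := by positivity
  have hnpos : (0 : ℤ) < (n : ℤ) := by exact_mod_cast hn
  set S : Set (Fin 3 → ℚ) := {Pi.single 0 1, Pi.single 1 1, Pi.single 2 1, v} with hS
  -- each standard basis vector is a generator
  have hgen : ∀ j : Fin 3, Pi.single j 1 ∈ AddSubgroup.closure S := by
    intro j
    apply AddSubgroup.subset_closure
    fin_cases j
    · exact Or.inl rfl
    · exact Or.inr (Or.inl rfl)
    · exact Or.inr (Or.inr (Or.inl rfl))
  -- integer vectors lie in the group
  have hZN : ∀ z : Fin 3 → ℤ, (fun i => (z i : ℚ)) ∈ AddSubgroup.closure S := by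
    intro z
    have hrep : (fun i => (z i : ℚ)) =
        z 0 • Pi.single (0 : Fin 3) (1:ℚ) + z 1 • Pi.single 1 1 + z 2 • Pi.single 2 1 := by
      funext i
      fin_cases i <;> simp [Pi.single_apply]
    rw [hrep]
    exact add_mem (add_mem (zsmul_mem (hgen 0) _) (zsmul_mem (hgen 1) _)) (zsmul_mem (hgen 2) _)
  -- the coordinates of v
  have hvi : ∀ i : Fin 3, ∃ a : ℕ, v i = (a : ℚ) / n := by
    intro i
    fin_cases i
    · exact ⟨a₁, by rw [hv]; rfl⟩
    · exact ⟨a₂, by rw [hv]; rfl⟩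
    · exact ⟨a₃, by rw [hv]; rfl⟩
  -- membership characterization
  have hmem : ∀ x : Fin 3 → ℚ, x ∈ AddSubgroup.closure S →
      ∃ k : ℤ, ∀ i, ∃ m : ℤ, x i = (m : ℚ) + (k : ℚ) * v i := by
    intro x hx
    induction hx using AddSubgroup.closure_induction with
    | mem y hy =>
      rcases hy with rfl | rfl | rfl | rfl
      · refine ⟨0, fun i => ⟨if i = 0 then 1 else 0, ?_⟩⟩
        by_cases h : i = 0 <;> simp [Pi.single_apply, h]
      · refine ⟨0, fun i => ⟨if i = 1 then 1 else 0, ?_⟩⟩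
        by_cases h : i = 1 <;> simp [Pi.single_apply, h]
      · refine ⟨0, fun i => ⟨if i = 2 then 1 else 0, ?_⟩⟩
        by_cases h : i = 2 <;> simp [Pi.single_apply, h]
      · exact ⟨1, fun i => ⟨0, by simp⟩⟩
    | zero => exact ⟨0, fun i => ⟨0, by simp⟩⟩
    | add x y hx hy ihx ihy =>
      obtain ⟨k₁, hk₁⟩ := ihx
      obtain ⟨k₂, hk₂⟩ := ihy
      refine ⟨k₁ + k₂, fun i => ?_⟩
      obtain ⟨m₁, hm₁⟩ := hk₁ i
      obtain ⟨m₂, hm₂⟩ := hk₂ i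
      refine ⟨m₁ + m₂, ?_⟩
      have : (x + y) i = x i + y i := rfl
      rw [this, hm₁, hm₂]
      push_cast
      ring
    | neg x hx ihx =>
      obtain ⟨k, hk⟩ := ihx
      refine ⟨-k, fun i => ?_⟩
      obtain ⟨m, hm⟩ := hk i
      refine ⟨-m, ?_⟩
      have : (-x) i = -(x i) := rfl
      rw [this, hm]
      push_cast
      ring
  -- the target finite set
  set img : Set (Fin 3 → ℚ) :=
    (fun k : ℕ => fun i => Int.fract ((k : ℚ) * v i)) '' Set.Ico 1 n with himg
  set T : Set (Fin 3 → ℚ) :=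
    insert (Pi.single 0 1) (insert (Pi.single 1 1) (insert (Pi.single 2 1) img)) with hT
  have hsub : {x ∈ {x | x ∈ AddSubgroup.closure S ∧ ∀ i, 0 ≤ x i} |
      x ≠ 0 ∧ ¬ ∃ y ∈ {x | x ∈ AddSubgroup.closure S ∧ ∀ i, 0 ≤ x i},
        ∃ z ∈ {x | x ∈ AddSubgroup.closure S ∧ ∀ i, 0 ≤ x i},
          y ≠ 0 ∧ z ≠ 0 ∧ x = y + z} ⊆ T := by
    intro x hx
    obtain ⟨⟨hxN, hxpos⟩, hx0, hxirr⟩ := hx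
    by_cases hsing : x = Pi.single 0 1 ∨ x = Pi.single 1 1 ∨ x = Pi.single 2 1
    · rcases hsing with rfl | rfl | rfl
      · exact Set.mem_insert _ _
      · exact Set.mem_insert_iff.2 (Or.inr (Set.mem_insert _ _))
      · exact Set.mem_insert_iff.2 (Or.inr (Set.mem_insert_iff.2 (Or.inr (Set.mem_insert _ _))))
    push_neg at hsing
    obtain ⟨hs0, hs1, hs2⟩ := hsing
    -- floor and fractional parts
    set w : Fin 3 → ℤ := fun i => ⌊x i⌋ with hwdef
    have hwpos : ∀ i, 0 ≤ w i := fun i => Int.floor_nonneg.2 (hxpos i)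
    have hwN : (fun i => (w i : ℚ)) ∈ AddSubgroup.closure S := hZN w
    set f : Fin 3 → ℚ := fun i => Int.fract (x i) with hfdef
    have hfN : f ∈ AddSubgroup.closure S := by
      have hrepr : f = x - fun i => (w i : ℚ) := by
        funext i
        show Int.fract (x i) = x i - ((⌊x i⌋ : ℤ) : ℚ)
        rw [Int.fract]
      rw [hrepr]
      exact sub_mem hxN hwN
    have hfpos : ∀ i, 0 ≤ f i := fun i => Int.fract_nonneg _
    have hxfw : x = (fun i => (w i : ℚ)) + f := by
      funext i
      have : (w i : ℚ) + f i = x i := Int.floor_add_fract (x i)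
      simpa using this.symm
    have hw0 : w = 0 := by
      by_contra hw0
      by_cases hf0 : f = 0
      · -- x is a nonzero nonnegative integer vector, not a basis vector
        obtain ⟨j, hj⟩ := Function.ne_iff.1 hx0
        have hj' : x j ≠ 0 := by simpa using hj
        have hxj : (1 : ℚ) ≤ x j := by
          have h1 : x j = (w j : ℚ) := by
            have h4 := congrFun hxfw j
            simp only [hf0] at h4
            simpa using h4
          have hwj : w j ≠ 0 := by
            intro h
            apply hj'
            simp [h1, h]
          have : 1 ≤ w j := lt_of_le_of_ne (hwpos j) (Ne.symm hwj)
          rw [h1]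
          exact_mod_cast this
        apply hxirr
        refine ⟨Pi.single j 1, ⟨hgen j, ?_⟩, x - Pi.single j 1, ⟨sub_mem hxN (hgen j), ?_⟩,
          ?_, ?_, by abel⟩
        · intro i
          by_cases h : i = j <;> simp [Pi.single_apply, h]
        · intro i
          by_cases h : i = j
          · subst h
            have h5 : (x - (Pi.single i 1 : Fin 3 → ℚ)) i = x i - 1 := by simp
            rw [h5]; linarith
          · have h5 : (x - (Pi.single j 1 : Fin 3 → ℚ)) i = x i - 0 := by
              simp [Pi.single_apply, h]
            rw [h5]; simpa using hxpos i
        · intro h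
          have := congrFun h j
          simp at this
        · intro h
          rw [sub_eq_zero] at h
          fin_cases j
          · exact hs0 h
          · exact hs1 h
          · exact hs2 h
      · -- x = w + f with both nonzero
        apply hxirr
        refine ⟨(fun i => (w i : ℚ)),
          ⟨hwN, fun i => by show (0:ℚ) ≤ ((w i : ℤ) : ℚ); exact_mod_cast hwpos i⟩,
          f, ⟨hfN, hfpos⟩, ?_, hf0, hxfw⟩
        intro h
        apply hw0
        funext i
        have := congrFun h i
        simpa using this
    -- now x lies in the fundamental box
    have hxi : ∀ i, x i = Int.fract (x i) := by
      intro i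
      have h1 : (w i : ℚ) + f i = x i := Int.floor_add_fract (x i)
      have h2 : w i = 0 := congrFun hw0 i
      simp [h2] at h1
      exact h1.symm
    obtain ⟨k, hk⟩ := hmem x hxN
    have hfr : ∀ i, x i = Int.fract ((k : ℚ) * v i) := by
      intro i
      obtain ⟨m, hm⟩ := hk i
      rw [hxi i, hm, Int.fract_intCast_add]
    set k' : ℤ := k % (n : ℤ) with hk'def
    have hk'0 : 0 ≤ k' := Int.emod_nonneg k hnpos.ne'
    have hk'n : k' < n := Int.emod_lt_of_pos k hnpos
    have key : ∀ i, Int.fract ((k : ℚ) * v i) = Int.fract ((k' : ℚ) * v i) := by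
      intro i
      obtain ⟨a, ha⟩ := hvi i
      rw [ha, Int.fract_eq_fract]
      refine ⟨(k / n) * a, ?_⟩
      have h2 : (n : ℤ) * (k / n) + k % n = k := Int.mul_ediv_add_emod k n
      have h3 : (k : ℚ) - (k' : ℚ) = (n : ℚ) * ((k / (n : ℤ) : ℤ) : ℚ) := by
        have := congrArg (fun t : ℤ => (t : ℚ)) h2
        push_cast at this
        rw [hk'def]
        push_cast
        linarith
      have : (k : ℚ) * ((a : ℚ) / n) - (k' : ℚ) * ((a : ℚ) / n)
          = ((k : ℚ) - (k' : ℚ)) * ((a : ℚ) / n) := by ring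
      rw [this, h3]
      field_simp
      push_cast
      ring
    have hk'ne : k' ≠ 0 := by
      intro h
      apply hx0
      funext i
      rw [hxi i, ← Int.fract_fract, ← hxi i, hfr i, key i, h]
      simp
    have hk'1 : 1 ≤ k'.toNat := by omega
    have hk'n' : k'.toNat < n := by omega
    refine Set.mem_insert_iff.2 (Or.inr (Set.mem_insert_iff.2 (Or.inr
      (Set.mem_insert_iff.2 (Or.inr ⟨k'.toNat, ⟨hk'1, hk'n'⟩, ?_⟩)))))
    funext i
    have hcast : ((k'.toNat : ℕ) : ℚ) = (k' : ℚ) := by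
      exact_mod_cast congrArg (fun t : ℤ => (t : ℚ)) (Int.toNat_of_nonneg hk'0)
    simp only [hcast]
    rw [← key i, ← hfr i]
  -- finiteness and cardinality of T
  have hTfin : T.Finite := by
    rw [hT]
    apply Set.Finite.insert
    apply Set.Finite.insert
    apply Set.Finite.insert
    rw [himg]
    exact (Set.finite_Ico 1 n).image _
  constructor
  · exact hTfin.subset hsub
  · have h1 : img.ncard ≤ n - 1 := by
      have h0 := Set.ncard_image_le (f := fun k : ℕ => fun i => Int.fract ((k : ℚ) * v i))
        (s := Set.Ico 1 n) (Set.finite_Ico 1 n)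
      have h2 : (Set.Ico 1 n).ncard = n - 1 := by
        rw [show Set.Ico 1 n = ↑(Finset.Ico 1 n) from (Finset.coe_Ico 1 n).symm,
          Set.ncard_coe_finset, Nat.card_Ico]
      rw [himg]
      omega
    have c2 := Set.ncard_insert_le (Pi.single (2 : Fin 3) (1 : ℚ)) img
    have c1 := Set.ncard_insert_le (Pi.single (1 : Fin 3) (1 : ℚ))
      (insert (Pi.single (2 : Fin 3) (1 : ℚ)) img)
    have c0 := Set.ncard_insert_le (Pi.single (0 : Fin 3) (1 : ℚ))
      (insert (Pi.single (1 : Fin 3) (1 : ℚ)) (insert (Pi.single (2 : Fin 3) (1 : ℚ)) img))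
    have hle : T.ncard ≤ n - 1 + 3 := by rw [hT]; omega
    exact le_trans (Set.ncard_le_ncard hsub hTfin) (by omega)
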